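/- arXiv:1702.02559 — 2 statements merged into one kernel-verified Lean document; each statement's English description precedes it below -/
import Mathlib

section
/- (Multi-pass recursion, general case.) Define α₁ = 0 and, for i ≥ 2, αᵢ = (i−1)/(4(i+1)²) + (1 − (3(i+1)+2)/(2(i+1)²))·αᵢ₋₁. Then for all i ≥ 1, αᵢ ≥ 1/6 − 4/(3i). -/
theorem stmt_14 (a : ℕ → ℝ) (h1 : a 1 = 0)
    (hrec : ∀ i : ℕ, 2 ≤ i →
      a i = ((i : ℝ) - 1) / (4 * (i + 1) ^ 2)
          + (1 - (3 * (i + 1) + 2) / (2 * (i + 1) ^ 2)) * a (i - 1)) :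
    ∀ i : ℕ, 1 ≤ i → a i ≥ 1 / 6 - 4 / (3 * i) := by
  intro i hi
  induction i, hi using Nat.le_induction with
  | base => rw [h1]; norm_num
  | succ i hi IH =>
    have h := hrec (i + 1) (by omega)
    simp only [Nat.add_sub_cancel] at h
    push_cast at h
    set n : ℝ := (i : ℝ) with hn
    have hn1 : (1 : ℝ) ≤ n := by rw [hn]; exact_mod_cast hi
    have hpos : (0:ℝ) < n := by linarith
    have h2 : (0:ℝ) < n + 2 := by linarith
    have hc : (0:ℝ) ≤ 1 - (3 * (n + 1 + 1) + 2) / (2 * (n + 1 + 1) ^ 2) := by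
      rw [sub_nonneg, div_le_one (by positivity)]
      nlinarith
    have hstep : a (i + 1) ≥ (n + 1 - 1) / (4 * (n + 1 + 1) ^ 2)
        + (1 - (3 * (n + 1 + 1) + 2) / (2 * (n + 1 + 1) ^ 2)) * (1 / 6 - 4 / (3 * n)) := by
      rw [h]
      have := mul_le_mul_of_nonneg_left IH hc
      linarith
    push_cast
    refine ge_trans hstep ?_
    rw [← hn, ← sub_nonneg]
    have e : (n + 1 - 1) / (4 * (n + 1 + 1) ^ 2)
        + (1 - (3 * (n + 1 + 1) + 2) / (2 * (n + 1 + 1) ^ 2)) * (1 / 6 - 4 / (3 * n))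
        - (1 / 6 - 4 / (3 * (n + 1))) = 4 / (3 * (n + 1) * (n + 2) ^ 2) := by
      field_simp
      ring
    rw [e]
    positivity
end

section
/- (Uncovered-vertex bound for maximal matchings.) Let M₀ and M* be matchings in a graph G with M₀ maximal. Then |V(M*) ∖ V(M₀)| ≥ 2|M*| − 2|M₀|, and the edges of M* incident to vertices of V(M*) ∖ V(M₀) all have their other endpoint in V(M₀); consequently any maximal matching M₁ in the bipartite set of edges between V∖V(M₀) and V(M₀) satisfies |M₁| ≥ |M*| − |M₀|. -/
open SimpleGraph Set

lemma aux_card_verts {V : Type*} [Fintype V] {G : SimpleGraph V} {M : G.Subgraph}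
    (h : M.IsMatching) : M.verts.ncard = 2 * M.edgeSet.ncard := by
  classical
  have hvfin : M.verts.Finite := Set.toFinite _
  have hefin : M.edgeSet.Finite := Set.toFinite _
  rw [Set.ncard_eq_toFinset_card _ hvfin, Set.ncard_eq_toFinset_card _ hefin]
  set f : V → Sym2 V :=
    fun v => if hv : v ∈ M.verts then (h.toEdge ⟨v, hv⟩ : Sym2 V) else s(v, v) with hf
  have hmaps : ∀ v ∈ hvfin.toFinset, f v ∈ hefin.toFinset := by
    intro v hv
    simp only [Set.Finite.mem_toFinset] at hv ⊢
    simp only [hf, dif_pos hv]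
    exact (h.toEdge ⟨v, hv⟩).2
  rw [Finset.card_eq_sum_card_fiberwise hmaps]
  have hfiber : ∀ e ∈ hefin.toFinset,
      (hvfin.toFinset.filter (fun v => f v = e)).card = 2 := by
    intro e he
    simp only [Set.Finite.mem_toFinset] at he
    induction e with
    | h a b =>
      have hab : M.Adj a b := he
      have hane : a ≠ b := (M.adj_sub hab).ne
      have ha : a ∈ M.verts := M.edge_vert hab
      have hb : b ∈ M.verts := M.edge_vert hab.symm
      have hset : hvfin.toFinset.filter (fun v => f v = s(a, b)) = {a, b} := by
        ext v
        simp only [Finset.mem_filter, Set.Finite.mem_toFinset, Finset.mem_insert,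
          Finset.mem_singleton]
        constructor
        · rintro ⟨hv, hfv⟩
          simp only [hf, dif_pos hv] at hfv
          have hvmem : v ∈ (h.toEdge ⟨v, hv⟩ : Sym2 V) := by
            simp [SimpleGraph.Subgraph.IsMatching.toEdge]
          rw [hfv] at hvmem
          simpa using hvmem
        · rintro (rfl | rfl)
          · refine ⟨ha, ?_⟩
            simp only [hf, dif_pos ha]
            rw [h.toEdge_eq_of_adj hab]
          · refine ⟨hb, ?_⟩
            simp only [hf, dif_pos hb]
            rw [h.toEdge_eq_of_adj hab.symm]
            simp [Sym2.eq_swap]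
      rw [hset, Finset.card_insert_of_notMem (by simpa using hane), Finset.card_singleton]
  rw [Finset.sum_congr rfl hfiber]
  simp [Finset.sum_const, mul_comm]

theorem stmt_16 {V : Type*} [Fintype V] (G : SimpleGraph V)
    (M₀ Mstar M₁ : G.Subgraph)
    (hmatch : M₀.IsMatching)
    (hmax : ∀ M' : G.Subgraph, M'.IsMatching → M₀ ≤ M' → M' = M₀)
    (hstar : Mstar.IsMatching)
    (hstarmax : ∀ M' : G.Subgraph, M'.IsMatching → Mstar.edgeSet.ncard ≥ M'.edgeSet.ncard)
    (hM₁ : M₁.IsMatching)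
    (hM₁F : ∀ u v : V, M₁.Adj u v → (u ∈ M₀.verts ↔ v ∉ M₀.verts))
    (hM₁max : ∀ M' : G.Subgraph, M'.IsMatching →
      (∀ u v : V, M'.Adj u v → (u ∈ M₀.verts ↔ v ∉ M₀.verts)) → M₁ ≤ M' → M' = M₁) :
    ((Mstar.verts \ M₀.verts).ncard : ℤ) ≥ 2 * Mstar.edgeSet.ncard - 2 * M₀.edgeSet.ncard
    ∧ (M₁.edgeSet.ncard : ℤ) ≥ Mstar.edgeSet.ncard - M₀.edgeSet.ncard := by
  classical
  -- V(M₀) is a vertex cover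
  have hcover : ∀ a b : V, G.Adj a b → a ∈ M₀.verts ∨ b ∈ M₀.verts := by
    intro a b hab
    by_contra hc
    push_neg at hc
    obtain ⟨ha, hb⟩ := hc
    have hdisj : Disjoint M₀.support (G.subgraphOfAdj hab).support := by
      rw [Set.disjoint_left]
      intro x hx hx'
      have hx1 : x ∈ M₀.verts := M₀.support_subset_verts hx
      have hx2 : x ∈ (G.subgraphOfAdj hab).verts :=
        (G.subgraphOfAdj hab).support_subset_verts hx'
      simp only [SimpleGraph.subgraphOfAdj_verts, Set.mem_insert_iff,
        Set.mem_singleton_iff] at hx2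
      rcases hx2 with rfl | rfl
      · exact ha hx1
      · exact hb hx1
    have hm' := hmatch.sup (SimpleGraph.Subgraph.IsMatching.subgraphOfAdj hab) hdisj
    have heq := hmax _ hm' le_sup_left
    have hmem : a ∈ (M₀ ⊔ G.subgraphOfAdj hab).verts := by
      rw [SimpleGraph.Subgraph.verts_sup]
      exact Set.mem_union_right _ (by simp)
    rw [heq] at hmem
    exact ha hmem
  set S : Set (Sym2 V) := {e | e ∈ Mstar.edgeSet ∧ ∃ v, v ∈ e ∧ v ∉ M₀.verts} with hSdef
  -- Step A : injection from uncovered Mstar-vertices into S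
  have hA : (Mstar.verts \ M₀.verts).ncard ≤ S.ncard := by
    set f : V → Sym2 V :=
      fun v => if hv : v ∈ Mstar.verts then (hstar.toEdge ⟨v, hv⟩ : Sym2 V) else s(v, v)
        with hfdef
    apply Set.ncard_le_ncard_of_injOn f ?_ ?_ (Set.toFinite _)
    · rintro v ⟨hv, hvM⟩
      simp only [hfdef, dif_pos hv]
      refine ⟨(hstar.toEdge ⟨v, hv⟩).2, v, ?_, hvM⟩
      simp [SimpleGraph.Subgraph.IsMatching.toEdge]
    · rintro v ⟨hv, hvM⟩ v' ⟨hv', hvM'⟩ hff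
      simp only [hfdef, dif_pos hv, dif_pos hv'] at hff
      have hvmem : v ∈ (hstar.toEdge ⟨v', hv'⟩ : Sym2 V) := by
        rw [← hff]
        simp [SimpleGraph.Subgraph.IsMatching.toEdge]
      have hedge : (hstar.toEdge ⟨v', hv'⟩ : Sym2 V) = s(v', (hstar hv').choose) := rfl
      rw [hedge, Sym2.mem_iff] at hvmem
      rcases hvmem with h1 | h2
      · exact h1
      · exfalso
        have hadj : Mstar.Adj v' v := by
          rw [h2]; exact (hstar hv').choose_spec.1
        rcases hcover v' v (Mstar.adj_sub hadj) with h | h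
        · exact hvM' h
        · exact hvM h
  -- every edge of S meets V(M₁)
  have hcov₁ : ∀ e ∈ S, ∃ x, x ∈ M₁.verts ∧ x ∈ e := by
    rintro e ⟨heM, a, hae, haM⟩
    by_contra hc
    push_neg at hc
    set b := Sym2.Mem.other hae with hbdef
    have hb' : s(a, b) = e := Sym2.other_spec hae
    have hadj : Mstar.Adj a b := by
      rw [← hb'] at heM
      exact heM
    have hGadj : G.Adj a b := Mstar.adj_sub hadj
    have haM₁ : a ∉ M₁.verts := fun h => hc a h hae
    have hbM₁ : b ∉ M₁.verts := fun h => hc b h (Sym2.other_mem hae)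
    have hdisj : Disjoint M₁.support (G.subgraphOfAdj hGadj).support := by
      rw [Set.disjoint_left]
      intro x hx hx'
      have hx1 : x ∈ M₁.verts := M₁.support_subset_verts hx
      have hx2 : x ∈ (G.subgraphOfAdj hGadj).verts :=
        (G.subgraphOfAdj hGadj).support_subset_verts hx'
      simp only [SimpleGraph.subgraphOfAdj_verts, Set.mem_insert_iff,
        Set.mem_singleton_iff] at hx2
      rcases hx2 with rfl | rfl
      · exact haM₁ hx1
      · exact hbM₁ hx1
    have hm' := hM₁.sup (SimpleGraph.Subgraph.IsMatching.subgraphOfAdj hGadj) hdisj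
    have hbM : b ∈ M₀.verts := (hcover a b hGadj).resolve_left haM
    have hF : ∀ u v : V, (M₁ ⊔ G.subgraphOfAdj hGadj).Adj u v →
        (u ∈ M₀.verts ↔ v ∉ M₀.verts) := by
      intro u v huv
      rw [SimpleGraph.Subgraph.sup_adj] at huv
      rcases huv with h | h
      · exact hM₁F u v h
      · simp only [SimpleGraph.subgraphOfAdj_adj, Sym2.eq_iff] at h
        rcases h with ⟨rfl, rfl⟩ | ⟨rfl, rfl⟩
        · constructor
          · intro h; exact absurd h haM
          · intro h; exact absurd hbM h
        · constructor
          · intro _ h; exact haM h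
          · intro _; exact hbM
    have heq := hM₁max _ hm' hF le_sup_left
    have hmem : a ∈ (M₁ ⊔ G.subgraphOfAdj hGadj).verts := by
      rw [SimpleGraph.Subgraph.verts_sup]
      exact Set.mem_union_right _ (by simp)
    rw [heq] at hmem
    exact haM₁ hmem
  -- Step B : injection from S into V(M₁)
  have hB : S.ncard ≤ M₁.verts.ncard := by
    rcases Set.eq_empty_or_nonempty S with hSe | ⟨e0, he0⟩
    · simp [hSe]
    obtain ⟨x0, hx0, -⟩ := hcov₁ e0 he0
    set g : Sym2 V → V :=
      fun e => if h : ∃ x, x ∈ M₁.verts ∧ x ∈ e then h.choose else x0 with hg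
    apply Set.ncard_le_ncard_of_injOn g ?_ ?_ (Set.toFinite _)
    · intro e he
      have hex := hcov₁ e he
      simp only [hg, dif_pos hex]
      exact hex.choose_spec.1
    · intro e he e' he' hge
      have hex := hcov₁ e he
      have hex' := hcov₁ e' he'
      simp only [hg, dif_pos hex, dif_pos hex'] at hge
      have hxe : hex.choose ∈ e := hex.choose_spec.2
      have hxe' : hex.choose ∈ e' := by rw [hge]; exact hex'.choose_spec.2
      obtain ⟨heM, -⟩ := he
      obtain ⟨heM', -⟩ := he'
      have h1 : s(hex.choose, Sym2.Mem.other hxe) = e := Sym2.other_spec hxe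
      have h2 : s(hex.choose, Sym2.Mem.other hxe') = e' := Sym2.other_spec hxe'
      have hadj1 : Mstar.Adj hex.choose (Sym2.Mem.other hxe) := by
        rw [← h1] at heM; exact heM
      have hadj2 : Mstar.Adj hex.choose (Sym2.Mem.other hxe') := by
        rw [← h2] at heM'; exact heM'
      have hx : hex.choose ∈ Mstar.verts := Mstar.edge_vert hadj1
      obtain ⟨w, -, huniq⟩ := hstar hx
      rw [← h1, ← h2, huniq _ hadj1, huniq _ hadj2]
  -- counting
  have h1 := aux_card_verts hmatch
  have h2 := aux_card_verts hstar
  have h3 := aux_card_verts hM₁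
  have hdiff : Mstar.verts.ncard ≤ (Mstar.verts \ M₀.verts).ncard + M₀.verts.ncard := by
    calc Mstar.verts.ncard ≤ ((Mstar.verts \ M₀.verts) ∪ M₀.verts).ncard := by
          apply Set.ncard_le_ncard _ (Set.toFinite _)
          intro x hx
          by_cases h : x ∈ M₀.verts
          · exact Set.mem_union_right _ h
          · exact Set.mem_union_left _ ⟨hx, h⟩
      _ ≤ _ := Set.ncard_union_le _ _
  rw [h1, h2] at hdiff
  rw [h3] at hB
  constructor
  · omega
  · omega
end
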